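/- arXiv:2002.07441 — 4 statements merged into one kernel-verified Lean document; each statement's English description precedes it below -/
import Mathlib

section
/- Let L: ℝ^p → ℝ be differentiable and convex, and let β̂ minimize β ↦ L(β) + λ‖β‖₁. Let β* ∈ ℝ^p, δ = β̂ - β*, and S = {j : β*_j ≠ 0}. Then L(β̂) - L(β*) ≤ λ(‖δ_S‖₁ - ‖δ_{S^c}‖₁), where δ_S and δ_{S^c} denote the restrictions of δ to S and its complement. -/
open Finset

/-- Let `L : ℝ^p → ℝ` be differentiable and convex, and let `β̂` minimize
`β ↦ L(β) + λ‖β‖₁`. Let `β* ∈ ℝ^p`, `δ = β̂ - β*`, and `S = {j : β*_j ≠ 0}`.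
Then `L(β̂) - L(β*) ≤ λ(‖δ_S‖₁ - ‖δ_{S^c}‖₁)`. -/
theorem lasso_basic_inequality {p : ℕ} (L : (Fin p → ℝ) → ℝ)
    (hdiff : Differentiable ℝ L) (hconv : ConvexOn ℝ Set.univ L)
    (lam : ℝ) (hlam : 0 < lam) (βhat βstar : Fin p → ℝ)
    (hmin : ∀ β : Fin p → ℝ,
      L βhat + lam * ∑ j, |βhat j| ≤ L β + lam * ∑ j, |β j|) :
    L βhat - L βstar ≤
      lam * ((∑ j ∈ Finset.univ.filter (fun j => βstar j ≠ 0), |βhat j - βstar j|) -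
        ∑ j ∈ Finset.univ.filter (fun j => βstar j = 0), |βhat j - βstar j|) := by
  have h1 := hmin βstar
  have h2 : L βhat - L βstar ≤ lam * (∑ j, |βstar j| - ∑ j, |βhat j|) := by
    nlinarith [h1]
  refine h2.trans ?_
  apply mul_le_mul_of_nonneg_left _ hlam.le
  have hsplit : ∀ f : Fin p → ℝ, (∑ j, f j) =
      (∑ j ∈ Finset.univ.filter (fun j => βstar j ≠ 0), f j) +
      ∑ j ∈ Finset.univ.filter (fun j => βstar j = 0), f j := by
    intro f
    rw [← Finset.sum_filter_add_sum_filter_not Finset.univ (fun j => βstar j ≠ 0) f]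
    simp [Finset.filter_congr (fun j _ => by tauto)]
  rw [hsplit (fun j => |βstar j|), hsplit (fun j => |βhat j|)]
  have hA : (∑ j ∈ Finset.univ.filter (fun j => βstar j ≠ 0), |βstar j|) -
      (∑ j ∈ Finset.univ.filter (fun j => βstar j ≠ 0), |βhat j|) ≤
      ∑ j ∈ Finset.univ.filter (fun j => βstar j ≠ 0), |βhat j - βstar j| := by
    rw [← Finset.sum_sub_distrib]
    apply Finset.sum_le_sum
    intro j _
    have := abs_sub_abs_le_abs_sub (βstar j) (βhat j)
    rw [abs_sub_comm] at this
    linarith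
  have hB : (∑ j ∈ Finset.univ.filter (fun j => βstar j = 0), |βstar j|) -
      (∑ j ∈ Finset.univ.filter (fun j => βstar j = 0), |βhat j|) =
      - ∑ j ∈ Finset.univ.filter (fun j => βstar j = 0), |βhat j - βstar j| := by
    rw [← Finset.sum_sub_distrib, ← Finset.sum_neg_distrib]
    apply Finset.sum_congr rfl
    intro j hj
    simp only [Finset.mem_filter] at hj
    rw [hj.2]
    simp
  linarith
end

section
/- Let α ∈ (0,1) and p ≥ 1 with p/α > 8, and let t = Φ⁻¹(1 - α/(2p)) be the (1-α/(2p))-quantile of the standard normal distribution. Then log(p/α) < t² < 2·log(2p/α). -/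
open MeasureTheory

/-- Density of the standard normal distribution. -/
noncomputable def stdNormalPDF (x : ℝ) : ℝ :=
  (Real.sqrt (2 * Real.pi))⁻¹ * Real.exp (-x ^ 2 / 2)

/-- Cumulative distribution function of the standard normal distribution. -/
noncomputable def stdNormalCDF (a : ℝ) : ℝ :=
  ∫ x in Set.Iic a, stdNormalPDF x

open Set Real Filter

lemma pdf_eq (x : ℝ) : stdNormalPDF x = (Real.sqrt (2*Real.pi))⁻¹ * Real.exp (-(1/2) * x^2) := by
  rw [stdNormalPDF]; ring_nf

lemma pdf_pos (x : ℝ) : 0 < stdNormalPDF x := by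
  apply mul_pos (inv_pos.2 (Real.sqrt_pos.2 (by positivity))) (Real.exp_pos _)

lemma pdf_integrable : Integrable stdNormalPDF := by
  simp only [funext pdf_eq]
  exact (integrable_exp_neg_mul_sq (by norm_num : (0:ℝ) < 1/2)).const_mul _

lemma pdf_integral : ∫ x, stdNormalPDF x = 1 := by
  simp only [funext pdf_eq]
  rw [MeasureTheory.integral_const_mul, integral_gaussian]
  rw [show Real.pi / (1/2) = 2 * Real.pi by ring]
  rw [inv_mul_cancel₀ (ne_of_gt (Real.sqrt_pos.2 (by positivity)))]

noncomputable def stdTail (t : ℝ) : ℝ := ∫ x in Set.Ioi t, stdNormalPDF x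

lemma cdf_add_tail (t : ℝ) : stdNormalCDF t + stdTail t = 1 := by
  rw [stdNormalCDF, stdTail, intervalIntegral.integral_Iic_add_Ioi pdf_integrable.integrableOn
    pdf_integrable.integrableOn, pdf_integral]

lemma pdf_hasDerivAt (x : ℝ) : HasDerivAt stdNormalPDF (-(x * stdNormalPDF x)) x := by
  have h1 : HasDerivAt (fun x : ℝ => -x^2/2) (-x) x := by
    have := (hasDerivAt_pow 2 x).neg.div_const 2
    simpa using this.congr_deriv (by ring)
  have h3 := ((Real.hasDerivAt_exp (-x^2/2)).comp x h1).const_mul ((Real.sqrt (2*Real.pi))⁻¹)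
  have h4 : HasDerivAt stdNormalPDF ((Real.sqrt (2*Real.pi))⁻¹ * (Real.exp (-x^2/2) * -x)) x := by
    exact h3
  convert h4 using 1
  rw [stdNormalPDF]; ring

lemma pdf_tendsto_zero : Tendsto stdNormalPDF atTop (nhds 0) := by
  have h : Tendsto (fun x : ℝ => x^2/2) atTop atTop :=
    (tendsto_pow_atTop (by norm_num)).atTop_div_const (by norm_num)
  have h2 := (Real.tendsto_exp_neg_atTop_nhds_zero.comp h).const_mul
    ((Real.sqrt (2*Real.pi))⁻¹)
  rw [mul_zero] at h2
  apply h2.congr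
  intro x
  simp only [Function.comp_apply, stdNormalPDF, neg_div]

lemma pdf_continuous : Continuous stdNormalPDF := by
  apply continuous_const.mul
  exact Real.continuous_exp.comp (by continuity)

lemma x_pdf_integrable : Integrable (fun x => x * stdNormalPDF x) := by
  have h := (integrable_mul_exp_neg_mul_sq (by norm_num : (0:ℝ) < 1/2)).const_mul
    ((Real.sqrt (2*Real.pi))⁻¹)
  exact h.congr (ae_of_all _ fun x => by simp only [pdf_eq]; ring)

lemma integral_x_pdf (t : ℝ) : ∫ x in Set.Ioi t, x * stdNormalPDF x = stdNormalPDF t := by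
  have h := integral_Ioi_of_hasDerivAt_of_tendsto' (a := t)
    (f := fun x => -stdNormalPDF x) (f' := fun x => x * stdNormalPDF x)
    (fun x _ => by simpa using (pdf_hasDerivAt x).fun_neg)
    x_pdf_integrable.integrableOn (by simpa using pdf_tendsto_zero.neg)
  simpa using h

lemma mills_upper {t : ℝ} (ht : 0 < t) : stdTail t ≤ stdNormalPDF t / t := by
  have h1 : stdTail t ≤ ∫ x in Set.Ioi t, x * stdNormalPDF x / t := by
    apply setIntegral_mono_on pdf_integrable.integrableOn
      (x_pdf_integrable.div_const t).integrableOn measurableSet_Ioi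
    intro x hx
    rw [le_div_iff₀ ht]
    nlinarith [pdf_pos x, hx.out]
  rwa [integral_div, integral_x_pdf] at h1

lemma mills_deriv (x : ℝ) : HasDerivAt (fun y => y/(1+y^2) * stdNormalPDF y)
    ((1 - 2*x^2 - x^4)/(1+x^2)^2 * stdNormalPDF x) x := by
  have h0 : (1 + x^2) ≠ 0 := by positivity
  have h1 : HasDerivAt (fun y : ℝ => y/(1+y^2)) ((1-x^2)/(1+x^2)^2) x := by
    have ha : HasDerivAt (fun y : ℝ => y) 1 x := hasDerivAt_id x
    have hb : HasDerivAt (fun y : ℝ => 1+y^2) (2*x) x := by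
      simpa using (hasDerivAt_pow 2 x).const_add 1
    exact (ha.fun_div hb h0).congr_deriv (by ring)
  refine (h1.fun_mul (pdf_hasDerivAt x)).congr_deriv ?_
  have : x / (1 + x^2) = x * (1 + x^2) / (1 + x^2)^2 := by
    rw [eq_div_iff (pow_ne_zero 2 h0), div_mul_eq_mul_div, div_eq_iff h0]; ring
  rw [this]; ring

lemma mills_lower (t : ℝ) : t/(1+t^2) * stdNormalPDF t ≤ stdTail t := by
  set G : ℝ → ℝ := fun x => (1 - 2*x^2 - x^4)/(1+x^2)^2 * stdNormalPDF x with hG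
  have hcoef : ∀ x : ℝ, |(1 - 2*x^2 - x^4)/(1+x^2)^2| ≤ 1 := by
    intro x
    rw [abs_div, div_le_one (by positivity)]
    rw [abs_of_nonneg (by positivity : (0:ℝ) ≤ (1+x^2)^2), abs_le]
    constructor <;> nlinarith [sq_nonneg x, sq_nonneg (x^2)]
  have hGcont : Continuous G := by
    apply Continuous.mul _ pdf_continuous
    exact (by continuity : Continuous fun x : ℝ => 1 - 2*x^2 - x^4).div
      (by continuity) (fun x => by positivity)
  have hGint : IntegrableOn G (Set.Ioi t) := by
    apply Integrable.mono' pdf_integrable.integrableOn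
      hGcont.aestronglyMeasurable.restrict
    apply ae_of_all
    intro x
    rw [hG]
    simp only [Real.norm_eq_abs]
    rw [abs_mul, abs_of_nonneg (le_of_lt (pdf_pos x))]
    calc |(1 - 2*x^2 - x^4)/(1+x^2)^2| * stdNormalPDF x
        ≤ 1 * stdNormalPDF x := by
          apply mul_le_mul_of_nonneg_right (hcoef x) (le_of_lt (pdf_pos x))
      _ = stdNormalPDF x := one_mul _
  have htend : Tendsto (fun x => x/(1+x^2) * stdNormalPDF x) atTop (nhds 0) := by
    apply squeeze_zero' (g := stdNormalPDF)
    · filter_upwards [eventually_ge_atTop (0:ℝ)] with x hx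
      have := pdf_pos x; positivity
    · filter_upwards [eventually_ge_atTop (0:ℝ)] with x hx
      have h1 : x/(1+x^2) ≤ 1 := by
        rw [div_le_one (by positivity)]; nlinarith
      have := pdf_pos x
      nlinarith
    · exact pdf_tendsto_zero
  have key := integral_Ioi_of_hasDerivAt_of_tendsto' (a := t)
    (fun x _ => mills_deriv x) hGint htend
  have h2 : ∫ x in Set.Ioi t, -G x ≤ ∫ x in Set.Ioi t, stdNormalPDF x := by
    apply setIntegral_mono_on hGint.neg pdf_integrable.integrableOn measurableSet_Ioi
    intro x _
    have h3 : -((1 - 2*x^2 - x^4)/(1+x^2)^2) ≤ 1 := by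
      have := hcoef x
      rw [abs_le] at this
      linarith [this.1]
    calc -G x = -((1 - 2*x^2 - x^4)/(1+x^2)^2) * stdNormalPDF x := by rw [hG]; ring
      _ ≤ 1 * stdNormalPDF x := mul_le_mul_of_nonneg_right h3 (le_of_lt (pdf_pos x))
      _ = stdNormalPDF x := one_mul _
  rw [integral_neg, key] at h2
  rw [← stdTail] at h2
  linarith

lemma sqrt_2pi_le : Real.sqrt (2*Real.pi) ≤ 2.50663 := by
  rw [show (2.50663:ℝ) = Real.sqrt (2.50663^2) from (Real.sqrt_sq (by norm_num)).symm]
  exact Real.sqrt_le_sqrt (by nlinarith [Real.pi_lt_d6])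

lemma one_le_sqrt_2pi : 1 ≤ Real.sqrt (2*Real.pi) := by
  rw [show (1:ℝ) = Real.sqrt 1 by simp]
  exact Real.sqrt_le_sqrt (by nlinarith [Real.pi_gt_three])

lemma exp_105_lt : Real.exp 1.05125 < 2.8656 := by
  have e2 : (0.94875:ℝ) ≤ Real.exp (-0.05125) := by
    nlinarith [Real.add_one_le_exp (-0.05125:ℝ)]
  have hmul : Real.exp 1.05125 * Real.exp (-0.05125) = Real.exp 1 := by
    rw [← Real.exp_add]; norm_num
  nlinarith [hmul, e2, Real.exp_pos (1.05125:ℝ), Real.exp_one_lt_d9]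

lemma poly_step {t : ℝ} (ht : 1.45 ≤ t) :
    2.50663*(1+t^2) < 2*t*(1 + t^2/2 + (t^2/2)^2/2 + (t^2/2)^3/6) := by
  have h0 : (0:ℝ) < t := by linarith
  nlinarith [mul_nonneg (sub_nonneg.2 ht) (sq_nonneg t),
    mul_nonneg (sub_nonneg.2 ht) (pow_nonneg h0.le 4),
    mul_nonneg (sub_nonneg.2 ht) (pow_nonneg h0.le 6),
    mul_nonneg (mul_nonneg (sub_nonneg.2 ht) (sub_nonneg.2 ht)) (pow_nonneg h0.le 4),
    sq_nonneg (t - 1.45), sq_nonneg t]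

lemma exp_lower {t : ℝ} (h : (0:ℝ) ≤ t^2/2) :
    1 + t^2/2 + (t^2/2)^2/2 + (t^2/2)^3/6 ≤ Real.exp (t^2/2) := by
  have h4 := Real.sum_le_exp_of_nonneg h 4
  simp only [Finset.sum_range_succ, Finset.sum_range_zero, Nat.factorial] at h4
  norm_num at h4
  linarith [h4]

/-- Let `α ∈ (0,1)` and `p ≥ 1` with `p/α > 8`, and let `t = Φ⁻¹(1 - α/(2p))` be the
`(1-α/(2p))`-quantile of the standard normal distribution. Then
`log(p/α) < t² < 2·log(2p/α)`. -/
theorem quantile_squared_bounds (α p t : ℝ) (hα0 : 0 < α) (hα1 : α < 1)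
    (hp : 1 ≤ p) (hpα : 8 < p / α) (ht : stdNormalCDF t = 1 - α / (2 * p)) :
    Real.log (p / α) < t ^ 2 ∧ t ^ 2 < 2 * Real.log (2 * p / α) := by
  have hp0 : 0 < p := lt_of_lt_of_le one_pos hp
  set q := α / (2*p) with hqdef
  have hq0 : 0 < q := by positivity
  have hq16 : q < 1/16 := by
    rw [lt_div_iff₀ hα0] at hpα
    rw [hqdef, div_lt_div_iff₀ (by positivity) (by norm_num)]
    linarith
  have htail : stdTail t = q := by
    have h := cdf_add_tail t
    rw [ht] at h; linarith
  have hs : Real.sqrt (2*Real.pi) ≤ 2.50663 := sqrt_2pi_le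
  have hs1 : (1:ℝ) ≤ Real.sqrt (2*Real.pi) := one_le_sqrt_2pi
  have hs0 : (0:ℝ) < Real.sqrt (2*Real.pi) := lt_of_lt_of_le one_pos hs1
  have hE0 := Real.exp_pos (1.05125:ℝ)
  -- Step 1 : t ≥ 1.45
  have ht145 : (1.45:ℝ) ≤ t := by
    by_contra hcon
    push_neg at hcon
    have h1 : stdTail 1.45 ≤ stdTail t := by
      apply setIntegral_mono_set pdf_integrable.integrableOn
        (ae_of_all _ fun x => le_of_lt (pdf_pos x))
      exact HasSubset.Subset.eventuallyLE (Set.Ioi_subset_Ioi hcon.le)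
    have h2 := mills_lower 1.45
    have h3 : stdNormalPDF 1.45 = (Real.sqrt (2*Real.pi))⁻¹ * Real.exp (-1.05125) := by
      rw [stdNormalPDF]; norm_num
    have hu : (2.50663:ℝ)⁻¹ ≤ (Real.sqrt (2*Real.pi))⁻¹ := by
      apply inv_anti₀ hs0 hs
    have hv : (2.8656:ℝ)⁻¹ ≤ (Real.exp 1.05125)⁻¹ := by
      apply inv_anti₀ hE0 exp_105_lt.le
    have h4 : (1:ℝ)/16 < 1.45/(1+1.45^2) * stdNormalPDF 1.45 := by
      rw [h3, Real.exp_neg]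
      calc (1:ℝ)/16 < 1.45/(1+1.45^2) * ((2.50663:ℝ)⁻¹ * (2.8656:ℝ)⁻¹) := by norm_num
        _ ≤ 1.45/(1+1.45^2) * ((Real.sqrt (2*Real.pi))⁻¹ * (Real.exp 1.05125)⁻¹) := by
            apply mul_le_mul_of_nonneg_left
              (mul_le_mul hu hv (by positivity) (by positivity)) (by norm_num)
    linarith
  have ht0 : (0:ℝ) < t := lt_of_lt_of_le (by norm_num) ht145
  constructor
  · -- lower bound : log (p/α) < t^2
    have hlb := mills_lower t
    rw [htail] at hlb
    set E := Real.exp (-t^2/2) with hEdef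
    have hEpos : 0 < E := Real.exp_pos _
    have hEF : E * Real.exp (t^2/2) = 1 := by
      rw [hEdef, ← Real.exp_add, show -t^2/2 + t^2/2 = 0 by ring, Real.exp_zero]
    have hexp_ge := exp_lower (t := t) (by positivity)
    have hpoly := poly_step ht145
    have hmain : Real.sqrt (2*Real.pi) * (1+t^2) < 2*t*Real.exp (t^2/2) := by
      calc Real.sqrt (2*Real.pi) * (1+t^2) ≤ 2.50663 * (1+t^2) := by nlinarith
        _ < 2*t*(1 + t^2/2 + (t^2/2)^2/2 + (t^2/2)^3/6) := hpoly
        _ ≤ 2*t*Real.exp (t^2/2) := by nlinarith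
    have hEE : Real.exp (-t^2) = E * E := by
      rw [hEdef, ← Real.exp_add]; congr 1; ring
    have key : Real.exp (-t^2) < 2*q := by
      have h5 : 2*t*Real.exp (t^2/2)*(E*E) = 2*t*E := by
        calc 2*t*Real.exp (t^2/2)*(E*E) = 2*t*E*(E*Real.exp (t^2/2)) := by ring
          _ = 2*t*E := by rw [hEF]; ring
      have h6 : Real.sqrt (2*Real.pi) * (1+t^2) * (E*E) < 2*t*E := by
        calc Real.sqrt (2*Real.pi) * (1+t^2) * (E*E)
            < 2*t*Real.exp (t^2/2)*(E*E) :=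
              mul_lt_mul_of_pos_right hmain (mul_pos hEpos hEpos)
          _ = 2*t*E := h5
      have h7 : Real.exp (-t^2) < 2 * (t/(1+t^2) * stdNormalPDF t) := by
        have hne1 : ((1:ℝ)+t^2) ≠ 0 := by positivity
        have heq : 2 * (t/(1+t^2) * stdNormalPDF t)
            = 2*t*E/((1+t^2) * Real.sqrt (2*Real.pi)) := by
          rw [stdNormalPDF, ← hEdef]
          field_simp
        rw [heq, hEE, lt_div_iff₀ (by positivity)]
        linear_combination h6
      linarith
    have hlog2 : -t^2 < Real.log (2*q) := by
      rw [← Real.log_exp (-t^2)]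
      exact Real.log_lt_log (Real.exp_pos _) key
    have hlogeq : Real.log (2*q) = - Real.log (p/α) := by
      rw [hqdef, ← Real.log_inv]
      congr 1
      field_simp
    rw [hlogeq] at hlog2
    linarith
  · -- upper bound : t^2 < 2 log (2p/α)
    have hub := mills_upper ht0
    rw [htail] at hub
    have hq_lt : q < Real.exp (-t^2/2) := by
      have hEpos := Real.exp_pos (-t^2/2)
      have h8 : stdNormalPDF t / t < Real.exp (-t^2/2) := by
        rw [stdNormalPDF, div_lt_iff₀ ht0]
        have hu1 : (Real.sqrt (2*Real.pi))⁻¹ ≤ 1 := inv_le_one_of_one_le₀ hs1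
        have hu0 : (0:ℝ) < (Real.sqrt (2*Real.pi))⁻¹ := by positivity
        nlinarith
      linarith
    have hlog1 : Real.log q < -t^2/2 := by
      calc Real.log q < Real.log (Real.exp (-t^2/2)) := Real.log_lt_log hq0 hq_lt
        _ = -t^2/2 := Real.log_exp _
    have hlogeq : Real.log q = - Real.log (2*p/α) := by
      rw [hqdef, ← Real.log_inv]
      congr 1
      field_simp
    rw [hlogeq] at hlog1
    linarith
end

section
/- Let L: ℝ^p → ℝ be three times differentiable such that for all β, u, v ∈ ℝ^p, |∇³L(β)[u,v,v]| ≤ M·‖u‖₂·∇²L(β)[v,v] for some constant M > 0 (self-concordant-like with respect to the ℓ₂ norm restricted to direction u = δ with bound M‖δ‖₂). Then for δ = β̂ - β*, L(β̂) - L(β*) ≥ ⟨δ, ∇L(β*)⟩ + (⟨δ, ∇²L(β*)δ⟩/(M²‖δ‖₂²))·(exp(-M‖δ‖₂) + M‖δ‖₂ - 1). -/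
lemma scl_core (g g1 h k : ℝ → ℝ) (a : ℝ) (ha : 0 < a)
    (hg : ∀ t, HasDerivAt g (g1 t) t)
    (hg1 : ∀ t, HasDerivAt g1 (h t) t)
    (hh : ∀ t, HasDerivAt h (k t) t)
    (hk : ∀ t, |k t| ≤ a * h t) :
    g 1 - g 0 ≥ g1 0 + h 0 / a ^ 2 * (Real.exp (-a) + a - 1) := by
  have ha' : a ≠ 0 := ne_of_gt ha
  have hpos : ∀ t, 0 ≤ h t := by
    intro t
    have h0 : 0 ≤ a * h t := le_trans (abs_nonneg _) (hk t)
    nlinarith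
  -- Gronwall: h t ≥ h 0 * exp (-(a*t)) for t ≥ 0
  set φ : ℝ → ℝ := fun t => h t * Real.exp (a * t) with hφ
  have hφd : ∀ t, HasDerivAt φ ((k t + a * h t) * Real.exp (a * t)) t := by
    intro t
    have he : HasDerivAt (fun t : ℝ => Real.exp (a * t)) (Real.exp (a * t) * a) t :=
      ((hasDerivAt_id t).const_mul a).exp.congr_deriv (by simp only [id_eq]; ring)
    have := (hh t).mul he
    refine this.congr_deriv ?_
    ring
  have hφmono : Monotone φ := by
    apply monotone_of_deriv_nonneg (fun t => (hφd t).differentiableAt)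
    intro t
    rw [(hφd t).deriv]
    have : 0 ≤ k t + a * h t := by nlinarith [hk t, neg_abs_le (k t)]
    positivity
  have hgron : ∀ t : ℝ, 0 ≤ t → h 0 * Real.exp (-(a * t)) ≤ h t := by
    intro t ht
    have h1 : h 0 * Real.exp (a * 0) ≤ h t * Real.exp (a * t) := hφmono ht
    rw [mul_zero, Real.exp_zero, mul_one] at h1
    rw [Real.exp_neg]
    have he : 0 < Real.exp (a * t) := Real.exp_pos _
    calc h 0 * (Real.exp (a*t))⁻¹ ≤ (h t * Real.exp (a*t)) * (Real.exp (a*t))⁻¹ := by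
          apply mul_le_mul_of_nonneg_right h1 (by positivity)
      _ = h t := by field_simp
  -- the function P = ψ'
  set P : ℝ → ℝ := fun t => g1 t - g1 0 - h 0 * ((1 - Real.exp (-(a * t))) / a) with hP
  have hPd : ∀ t, HasDerivAt P (h t - h 0 * Real.exp (-(a * t))) t := by
    intro t
    have he : HasDerivAt (fun t : ℝ => Real.exp (-(a * t))) (Real.exp (-(a * t)) * (-a)) t :=
      (((hasDerivAt_id t).const_mul a).neg).exp.congr_deriv (by simp only [id_eq, Pi.neg_apply]; ring)
    have h2 : HasDerivAt (fun t => h 0 * ((1 - Real.exp (-(a * t))) / a))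
        (h 0 * ((0 - Real.exp (-(a * t)) * (-a)) / a)) t :=
      (((hasDerivAt_const t (1:ℝ)).sub he).div_const a).const_mul (h 0)
    have := ((hg1 t).sub_const (g1 0)).sub h2
    refine this.congr_deriv ?_
    field_simp
    ring
  set Q : ℝ → ℝ := fun t =>
    g t - g 0 - g1 0 * t - h 0 * ((Real.exp (-(a * t)) + a * t - 1) / a ^ 2) with hQ
  have hQd : ∀ t, HasDerivAt Q (P t) t := by
    intro t
    have he : HasDerivAt (fun t : ℝ => Real.exp (-(a * t))) (Real.exp (-(a * t)) * (-a)) t :=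
      (((hasDerivAt_id t).const_mul a).neg).exp.congr_deriv (by simp only [id_eq, Pi.neg_apply]; ring)
    have hlin : HasDerivAt (fun t : ℝ => a * t) (a * 1) t := (hasDerivAt_id t).const_mul a
    have h2 : HasDerivAt (fun t => h 0 * ((Real.exp (-(a * t)) + a * t - 1) / a ^ 2))
        (h 0 * ((Real.exp (-(a * t)) * (-a) + a * 1) / a ^ 2)) t :=
      (((he.add hlin).sub_const 1).div_const (a ^ 2)).const_mul (h 0)
    have h3 : HasDerivAt (fun t : ℝ => g1 0 * t) (g1 0 * 1) t := (hasDerivAt_id t).const_mul (g1 0)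
    have := (((hg t).sub_const (g 0)).sub h3).sub h2
    refine this.congr_deriv ?_
    simp only [hP]
    field_simp
    ring
  -- P ≥ 0 on [0, ∞)
  have hPmono : MonotoneOn P (Set.Ici (0:ℝ)) := by
    apply monotoneOn_of_deriv_nonneg (convex_Ici 0)
      (fun t _ => ((hPd t).differentiableAt).continuousAt.continuousWithinAt)
      (fun t _ => ((hPd t).differentiableAt).differentiableWithinAt)
    intro t ht
    rw [interior_Ici] at ht
    rw [(hPd t).deriv]
    have := hgron t (le_of_lt ht)
    linarith
  have hP0 : P 0 = 0 := by simp [hP]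
  have hPnonneg : ∀ t ∈ Set.Ici (0:ℝ), 0 ≤ P t := by
    intro t ht
    have := hPmono (Set.self_mem_Ici) ht ht
    rw [hP0] at this
    exact this
  have hQmono : MonotoneOn Q (Set.Ici (0:ℝ)) := by
    apply monotoneOn_of_deriv_nonneg (convex_Ici 0)
      (fun t _ => ((hQd t).differentiableAt).continuousAt.continuousWithinAt)
      (fun t _ => ((hQd t).differentiableAt).differentiableWithinAt)
    intro t ht
    rw [interior_Ici] at ht
    rw [(hQd t).deriv]
    exact hPnonneg t (Set.mem_Ici.mpr (le_of_lt ht))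
  have hQ1 : Q 0 ≤ Q 1 := hQmono (Set.self_mem_Ici) (by norm_num) (by norm_num)
  have hQ0 : Q 0 = 0 := by simp [hQ]
  rw [hQ0] at hQ1
  simp only [hQ, mul_one] at hQ1
  rw [ge_iff_le]
  calc g1 0 + h 0 / a ^ 2 * (Real.exp (-a) + a - 1)
      = g1 0 + h 0 * ((Real.exp (-a) + a - 1) / a ^ 2) := by ring
    _ ≤ g 1 - g 0 := by linarith


/-- Self-concordant-like lower bound: if `L` is three times differentiable with
`|∇³L(β)[u,v,v]| ≤ M·‖u‖₂·∇²L(β)[v,v]` for all `β, u, v`, then for `δ = β̂ - β*`,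
`L(β̂) - L(β*) ≥ ⟨δ, ∇L(β*)⟩ + (⟨δ, ∇²L(β*)δ⟩/(M²‖δ‖₂²))·(exp(-M‖δ‖₂) + M‖δ‖₂ - 1)`. -/
theorem self_concordant_lower_bound {p : ℕ} (L : (Fin p → ℝ) → ℝ) (M : ℝ) (hM : 0 < M)
    (hL : ContDiff ℝ 3 L)
    (hself : ∀ β u v : Fin p → ℝ,
      |iteratedFDeriv ℝ 3 L β ![u, v, v]| ≤
        M * Real.sqrt (∑ j, (u j) ^ 2) * iteratedFDeriv ℝ 2 L β ![v, v])
    (βhat βstar : Fin p → ℝ) :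
    L βhat - L βstar ≥
      fderiv ℝ L βstar (βhat - βstar) +
        (iteratedFDeriv ℝ 2 L βstar ![βhat - βstar, βhat - βstar] /
            (M ^ 2 * Real.sqrt (∑ j, (βhat j - βstar j) ^ 2) ^ 2)) *
          (Real.exp (-(M * Real.sqrt (∑ j, (βhat j - βstar j) ^ 2))) +
            M * Real.sqrt (∑ j, (βhat j - βstar j) ^ 2) - 1) := by
  set δ : Fin p → ℝ := βhat - βstar with hδdef
  set s : ℝ := Real.sqrt (∑ j, (βhat j - βstar j) ^ 2) with hs
  by_cases hδ0 : βhat = βstar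
  · subst hδ0
    have hδz : δ = 0 := by simp [hδdef]
    have hsz : s = 0 := by simp [hs]
    rw [hsz, hδz] at *
    simp
  -- main case
  have hsum : ∀ u : Fin p → ℝ, Real.sqrt (∑ j, ((u : Fin p → ℝ) j) ^ 2) = Real.sqrt (∑ j, u j ^ 2) := fun _ => rfl
  have hspos : 0 < s := by
    rw [hs]
    apply Real.sqrt_pos.mpr
    have : ∃ j, βhat j ≠ βstar j := by
      by_contra hc
      push_neg at hc
      exact hδ0 (funext hc)
    obtain ⟨j, hj⟩ := this
    apply Finset.sum_pos' (fun i _ => sq_nonneg _) ⟨j, Finset.mem_univ j, by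
      have hne : βhat j - βstar j ≠ 0 := sub_ne_zero.mpr hj
      positivity⟩
  set a : ℝ := M * s with ha
  have hapos : 0 < a := mul_pos hM hspos
  set c : ℝ → (Fin p → ℝ) := fun t => βstar + t • δ with hc
  have hcd : ∀ t, HasDerivAt c δ t := by
    intro t
    have : HasDerivAt (fun t : ℝ => t • δ) ((1:ℝ) • δ) t := (hasDerivAt_id t).smul_const δ
    exact (by simpa using this : HasDerivAt _ δ t).const_add βstar
  set g : ℝ → ℝ := fun t => L (c t) with hg
  set g1 : ℝ → ℝ := fun t => fderiv ℝ L (c t) δ with hg1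
  set h : ℝ → ℝ := fun t => iteratedFDeriv ℝ 2 L (c t) ![δ, δ] with hh
  set k : ℝ → ℝ := fun t => iteratedFDeriv ℝ 3 L (c t) ![δ, δ, δ] with hk
  have hgd : ∀ t, HasDerivAt g (g1 t) t := by
    intro t
    exact ((hL.differentiable (by norm_num) (c t)).hasFDerivAt).comp_hasDerivAt t (hcd t)
  have hg1d : ∀ t, HasDerivAt g1 (h t) t := by
    intro t
    have hF1 : ContDiff ℝ 2 (fderiv ℝ L) := hL.fderiv_right (by norm_num)
    have hd : HasDerivAt (fun t => fderiv ℝ L (c t)) (fderiv ℝ (fderiv ℝ L) (c t) δ) t :=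
      ((hF1.differentiable (by norm_num) (c t)).hasFDerivAt).comp_hasDerivAt t (hcd t)
    have := hd.clm_apply (hasDerivAt_const t δ)
    simp only [map_zero, add_zero] at this
    have heq : h t = fderiv ℝ (fderiv ℝ L) (c t) δ δ := by
      show iteratedFDeriv ℝ 2 L (c t) ![δ, δ] = _
      rw [iteratedFDeriv_two_apply]
      simp
    rw [heq]
    exact this
  have hhd : ∀ t, HasDerivAt h (k t) t := by
    intro t
    have hF2 : ContDiff ℝ 1 (iteratedFDeriv ℝ 2 L) :=
      hL.iteratedFDeriv_right (by norm_num)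
    have hd : HasDerivAt (fun t => iteratedFDeriv ℝ 2 L (c t))
        (fderiv ℝ (iteratedFDeriv ℝ 2 L) (c t) δ) t :=
      ((hF2.differentiable (by norm_num) (c t)).hasFDerivAt).comp_hasDerivAt t (hcd t)
    have := (ContinuousMultilinearMap.apply ℝ (fun _ : Fin 2 => (Fin p → ℝ)) ℝ
        ![δ, δ]).hasFDerivAt.comp_hasDerivAt t hd
    have heq : k t = fderiv ℝ (iteratedFDeriv ℝ 2 L) (c t) δ ![δ, δ] := by
      show iteratedFDeriv ℝ 3 L (c t) ![δ, δ, δ] = _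
      rw [iteratedFDeriv_succ_apply_left]
      have h0 : (![δ, δ, δ] : Fin 3 → Fin p → ℝ) 0 = δ := rfl
      have ht : Fin.tail (![δ, δ, δ] : Fin 3 → Fin p → ℝ) = ![δ, δ] := by
        ext i
        fin_cases i <;> rfl
      rw [h0, ht]
    rw [heq]
    exact this
  have hkb : ∀ t, |k t| ≤ a * h t := by
    intro t
    have := hself (c t) δ δ
    simp only [ha, hk, hh, hs]
    convert this using 3
    simp [hδdef]
  have key := scl_core g g1 h k a hapos hgd hg1d hhd hkb
  have hc1 : c 1 = βhat := by
    funext j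
    simp [hc, hδdef]
  have hc0 : c 0 = βstar := by simp [hc]
  simp only [hg, hg1, hh, hc1, hc0] at key
  rw [show M ^ 2 * s ^ 2 = a ^ 2 from by rw [ha]; ring]
  exact key
end

section
/- For the negative binomial log-likelihood L as above, with sup_{i,j}|x_{ij}| ≤ R, the third directional derivative satisfies |∇³L(β)[u,v,v]| ≤ R·‖u‖₁·∇²L(β)[v,v] for all β, u, v ∈ ℝ^p. -/
open Finset

private lemma HasDerivAt.congr_d {f : ℝ → ℝ} {a b t : ℝ} (h : HasDerivAt f a t)
    (e : a = b) : HasDerivAt f b t := e ▸ h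

private noncomputable def nbd1 (cn yi r t : ℝ) : ℝ :=
  -cn * (yi - (yi + r) * (Real.exp t / (r + Real.exp t)))

private noncomputable def nbd2 (cn yi r t : ℝ) : ℝ :=
  cn * ((yi + r) * (r * Real.exp t / (r + Real.exp t) ^ 2))

private noncomputable def nbd3 (cn yi r t : ℝ) : ℝ :=
  cn * ((yi + r) * (r * Real.exp t * (r - Real.exp t) / (r + Real.exp t) ^ 3))

private lemma nb_apos {r : ℝ} (hr : 0 < r) (t : ℝ) : 0 < r + Real.exp t := by
  positivity

private lemma hasDerivAt_nbphi {cn yi r : ℝ} (hr : 0 < r) (t : ℝ) :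
    HasDerivAt (fun s => -cn * (yi * (s - Real.log (r + Real.exp s)) -
      r * Real.log (r + Real.exp s))) (nbd1 cn yi r t) t := by
  have ha : r + Real.exp t ≠ 0 := (nb_apos hr t).ne'
  have he := Real.hasDerivAt_exp t
  have hA : HasDerivAt (fun s => r + Real.exp s) (Real.exp t) t := he.const_add r
  have hlog : HasDerivAt (fun s => Real.log (r + Real.exp s))
      (Real.exp t / (r + Real.exp t)) t := hA.log ha
  have h := HasDerivAt.const_mul (-cn)
    ((((hasDerivAt_id' (x := t)).sub hlog).const_mul yi).sub (hlog.const_mul r))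
  refine h.congr_d ?_
  unfold nbd1
  field_simp
  ring

private lemma hasDerivAt_nbd1 {cn yi r : ℝ} (hr : 0 < r) (t : ℝ) :
    HasDerivAt (nbd1 cn yi r) (nbd2 cn yi r t) t := by
  have ha : r + Real.exp t ≠ 0 := (nb_apos hr t).ne'
  have he := Real.hasDerivAt_exp t
  have hA : HasDerivAt (fun s => r + Real.exp s) (Real.exp t) t := he.const_add r
  have hq : HasDerivAt (fun s => Real.exp s / (r + Real.exp s))
      ((Real.exp t * (r + Real.exp t) - Real.exp t * Real.exp t) / (r + Real.exp t) ^ 2) t :=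
    he.div hA ha
  have h := HasDerivAt.const_mul (-cn)
    ((hasDerivAt_const t yi).sub (hq.const_mul (yi + r)))
  refine h.congr_d ?_
  unfold nbd2
  field_simp
  ring

private lemma hasDerivAt_nbd2 {cn yi r : ℝ} (hr : 0 < r) (t : ℝ) :
    HasDerivAt (nbd2 cn yi r) (nbd3 cn yi r t) t := by
  have ha : r + Real.exp t ≠ 0 := (nb_apos hr t).ne'
  have he := Real.hasDerivAt_exp t
  have hA : HasDerivAt (fun s => r + Real.exp s) (Real.exp t) t := he.const_add r
  have hq := (he.const_mul r).div (hA.pow 2) (pow_ne_zero 2 ha)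
  have h := HasDerivAt.const_mul cn (hq.const_mul (yi + r))
  refine h.congr_d ?_
  unfold nbd3
  simp only [Pi.pow_apply]
  field_simp
  ring

private lemma nbd2_nonneg {cn yi r t : ℝ} (hcn : 0 ≤ cn) (hy : 0 ≤ yi) (hr : 0 < r) :
    0 ≤ nbd2 cn yi r t := by
  have h1 := nb_apos hr t
  have h2 := Real.exp_pos t
  unfold nbd2
  positivity

private lemma abs_nbd3_le {cn yi r t : ℝ} (hcn : 0 ≤ cn) (hy : 0 ≤ yi) (hr : 0 < r) :
    |nbd3 cn yi r t| ≤ nbd2 cn yi r t := by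
  have ha := nb_apos hr t
  have he := Real.exp_pos t
  have habs : |r - Real.exp t| ≤ r + Real.exp t :=
    abs_le.mpr ⟨by linarith, by linarith⟩
  unfold nbd2 nbd3
  rw [abs_mul, abs_mul, abs_of_nonneg hcn, abs_of_nonneg (by linarith : (0:ℝ) ≤ yi + r)]
  have h1 : |r * Real.exp t * (r - Real.exp t) / (r + Real.exp t) ^ 3| ≤
      r * Real.exp t / (r + Real.exp t) ^ 2 := by
    rw [abs_div, abs_of_nonneg (by positivity : (0:ℝ) ≤ (r + Real.exp t) ^ 3),
      abs_mul, abs_of_nonneg (by positivity : (0:ℝ) ≤ r * Real.exp t),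
      div_le_div_iff₀ (by positivity) (by positivity)]
    nlinarith [mul_le_mul_of_nonneg_left habs (by positivity : (0:ℝ) ≤ r * Real.exp t),
      sq_nonneg (r + Real.exp t), mul_pos ha (mul_pos ha ha)]
  exact mul_le_mul_of_nonneg_left
    (mul_le_mul_of_nonneg_left h1 (by linarith : (0:ℝ) ≤ yi + r)) hcn

private lemma iterSuccLeft {E : Type*} [NormedAddCommGroup E] [NormedSpace ℝ E]
    {f : E → ℝ} {N : ℕ} {b : E}
    (hf : DifferentiableAt ℝ (iteratedFDeriv ℝ N f) b) (m : Fin (N + 1) → E) :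
    iteratedFDeriv ℝ (N + 1) f b m =
      fderiv ℝ (fun b' => iteratedFDeriv ℝ N f b' (Fin.tail m)) b (m 0) := by
  rw [iteratedFDeriv_succ_apply_left,
    fderiv_continuousMultilinear_apply_const hf (Fin.tail m),
    ContinuousLinearMap.flipMultilinear_apply_apply]

/-- For the negative binomial log-likelihood `L` with `sup_{i,j}|x_{ij}| ≤ R`, the third
directional derivative satisfies `|∇³L(β)[u,v,v]| ≤ R·‖u‖₁·∇²L(β)[v,v]`
for all `β, u, v ∈ ℝ^p`. -/
theorem negBinomial_loglik_third_deriv_bound {n p : ℕ} (hn : 0 < n)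
    (x : Fin n → Fin p → ℝ) (y : Fin n → ℝ) (hy : ∀ i, 0 ≤ y i)
    (r R : ℝ) (hr : 0 < r) (hx : ∀ i j, |x i j| ≤ R)
    (L : (Fin p → ℝ) → ℝ)
    (hL : L = fun β : Fin p → ℝ => -(1 / (n : ℝ)) * ∑ i,
      (y i * ((∑ j, x i j * β j) - Real.log (r + Real.exp (∑ j, x i j * β j))) -
        r * Real.log (r + Real.exp (∑ j, x i j * β j)))) :
    ∀ (β u v : Fin p → ℝ),
      |iteratedFDeriv ℝ 3 L β ![u, v, v]| ≤
        R * (∑ j, |u j|) * iteratedFDeriv ℝ 2 L β ![v, v] := by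
  intro β u v
  have hcn0 : (0:ℝ) ≤ 1 / (n : ℝ) := by positivity
  set cn : ℝ := 1 / (n : ℝ) with hcn
  -- the linear functionals
  obtain ⟨Lc, hLc⟩ : ∃ Lc : Fin n → ((Fin p → ℝ) →L[ℝ] ℝ),
      ∀ i b, Lc i b = ∑ j, x i j * b j :=
    ⟨fun i => ∑ j, x i j • (ContinuousLinearMap.proj j : (Fin p → ℝ) →L[ℝ] ℝ), by
      intro i b
      simp [ContinuousLinearMap.sum_apply]⟩
  have hLphi : L = fun b => ∑ i, -cn * (y i * (Lc i b - Real.log (r + Real.exp (Lc i b))) -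
      r * Real.log (r + Real.exp (Lc i b))) := by
    rw [hL]
    funext b
    rw [Finset.mul_sum]
    refine Finset.sum_congr rfl fun i _ => ?_
    rw [hLc, hcn]
  -- smoothness
  have hC : ContDiff ℝ 3 L := by
    rw [hLphi]
    apply ContDiff.sum
    intro i _
    have hs : ContDiff ℝ 3 fun b : Fin p → ℝ => (Lc i) b := (Lc i).contDiff
    have hA : ContDiff ℝ 3 fun b => r + Real.exp (Lc i b) :=
      contDiff_const.add (Real.contDiff_exp.comp hs)
    have hlog : ContDiff ℝ 3 fun b => Real.log (r + Real.exp (Lc i b)) := by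
      rw [contDiff_iff_contDiffAt]
      intro b
      exact hA.contDiffAt.log (nb_apos hr (Lc i b)).ne'
    exact contDiff_const.mul ((contDiff_const.mul (hs.sub hlog)).sub
      (contDiff_const.mul hlog))
  -- first derivative
  have h1 : ∀ b, HasFDerivAt L (∑ i, nbd1 cn (y i) r (Lc i b) • Lc i) b := by
    intro b
    rw [hLphi]
    exact HasFDerivAt.fun_sum fun i _ =>
      (hasDerivAt_nbphi (cn := cn) (yi := y i) hr (Lc i b)).comp_hasFDerivAt b
        (Lc i).hasFDerivAt
  have hfd1 : ∀ b, fderiv ℝ L b = ∑ i, nbd1 cn (y i) r (Lc i b) • Lc i :=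
    fun b => (h1 b).fderiv
  -- second derivative of the direction-applied first derivative
  have h2 : ∀ b, HasFDerivAt (fun b' => ∑ i, nbd1 cn (y i) r (Lc i b') * Lc i v)
      (∑ i, (nbd2 cn (y i) r (Lc i b) * Lc i v) • Lc i) b := by
    intro b
    exact HasFDerivAt.fun_sum fun i _ =>
      ((hasDerivAt_nbd1 (cn := cn) (yi := y i) hr (Lc i b)).mul_const
        (Lc i v)).comp_hasFDerivAt b (Lc i).hasFDerivAt
  have h2iter : ∀ b, iteratedFDeriv ℝ 2 L b ![v, v] =
      ∑ i, nbd2 cn (y i) r (Lc i b) * (Lc i v) ^ 2 := by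
    intro b
    have hdiff1 : DifferentiableAt ℝ (iteratedFDeriv ℝ 1 L) b :=
      (hC.differentiable_iteratedFDeriv (by norm_num)).differentiableAt
    have e2 := iterSuccLeft (N := 1) hdiff1 ![v, v]
    have ht2 : Fin.tail ![v, v] = ![v] := by
      funext i; fin_cases i <;> rfl
    rw [ht2] at e2
    simp only [iteratedFDeriv_one_apply, Matrix.cons_val_zero] at e2
    refine e2.trans ?_
    have hfn : (fun b' => fderiv ℝ L b' v) =
        fun b' => ∑ i, nbd1 cn (y i) r (Lc i b') * Lc i v := by
      funext b'
      rw [hfd1 b']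
      simp only [ContinuousLinearMap.sum_apply, ContinuousLinearMap.smul_apply, smul_eq_mul]
    rw [hfn, (h2 b).fderiv]
    simp only [ContinuousLinearMap.sum_apply, ContinuousLinearMap.smul_apply, smul_eq_mul]
    exact Finset.sum_congr rfl fun i _ => by ring
  -- third derivative
  have h3 : HasFDerivAt (fun b => ∑ i, nbd2 cn (y i) r (Lc i b) * (Lc i v) ^ 2)
      (∑ i, (nbd3 cn (y i) r (Lc i β) * (Lc i v) ^ 2) • Lc i) β :=
    HasFDerivAt.fun_sum fun i _ =>
      ((hasDerivAt_nbd2 (cn := cn) (yi := y i) hr (Lc i β)).mul_const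
        ((Lc i v) ^ 2)).comp_hasFDerivAt β (Lc i).hasFDerivAt
  have h3iter : iteratedFDeriv ℝ 3 L β ![u, v, v] =
      ∑ i, nbd3 cn (y i) r (Lc i β) * (Lc i v) ^ 2 * Lc i u := by
    have hdiff2 : DifferentiableAt ℝ (iteratedFDeriv ℝ 2 L) β :=
      (hC.differentiable_iteratedFDeriv (by norm_num)).differentiableAt
    have e3 := iterSuccLeft (N := 2) hdiff2 ![u, v, v]
    have ht3 : Fin.tail ![u, v, v] = ![v, v] := by
      funext i; fin_cases i <;> rfl
    rw [ht3] at e3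
    simp only [Matrix.cons_val_zero] at e3
    refine e3.trans ?_
    have hfn : (fun b => iteratedFDeriv ℝ 2 L b ![v, v]) =
        fun b => ∑ i, nbd2 cn (y i) r (Lc i b) * (Lc i v) ^ 2 := funext h2iter
    rw [hfn, h3.fderiv]
    simp only [ContinuousLinearMap.sum_apply, ContinuousLinearMap.smul_apply, smul_eq_mul]
  -- the bound
  rw [h3iter, h2iter β, Finset.mul_sum]
  have hu : ∀ i, |Lc i u| ≤ R * ∑ j, |u j| := by
    intro i
    rw [hLc, Finset.mul_sum]
    refine (Finset.abs_sum_le_sum_abs _ _).trans (Finset.sum_le_sum fun j _ => ?_)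
    rw [abs_mul]
    exact mul_le_mul_of_nonneg_right (hx i j) (abs_nonneg _)
  refine (Finset.abs_sum_le_sum_abs _ _).trans (Finset.sum_le_sum fun i _ => ?_)
  have hd3 := abs_nbd3_le (cn := cn) (yi := y i) (t := Lc i β) hcn0 (hy i) hr
  have hd2 := nbd2_nonneg (cn := cn) (yi := y i) (t := Lc i β) hcn0 (hy i) hr
  calc |nbd3 cn (y i) r (Lc i β) * Lc i v ^ 2 * Lc i u|
      = |nbd3 cn (y i) r (Lc i β)| * Lc i v ^ 2 * |Lc i u| := by
        rw [abs_mul, abs_mul, abs_pow, sq_abs]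
    _ ≤ nbd2 cn (y i) r (Lc i β) * Lc i v ^ 2 * (R * ∑ j, |u j|) := by
        have h0 : (0:ℝ) ≤ R * ∑ j, |u j| := le_trans (abs_nonneg _) (hu i)
        exact mul_le_mul (mul_le_mul_of_nonneg_right hd3 (sq_nonneg _)) (hu i)
          (abs_nonneg _) (by positivity)
    _ = R * (∑ j, |u j|) * (nbd2 cn (y i) r (Lc i β) * Lc i v ^ 2) := by ring
end
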